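/- For natural numbers n ≥ 1, j ≥ 1, and k with j ≤ k ≤ n, the identity ∑_{i=1}^{j} (-1)^{i+j} (n+i-1)! / ((n+i-k)! (i-1)! (j-i)!) = binom(k-1, j-1) · n! / (n-k+j)! holds, while for k < j the left-hand side equals 0. -/

import Mathlib

open Finset fwdDiff

-- key finite-difference lemma
lemma key (d : ℕ) : ∀ (J x : ℕ), d ≤ x →
    (fwdDiff (1:ℕ))^[J] (fun y : ℕ => ((y.factorial : ℚ) / (y - d).factorial)) x
      = (d.descFactorial J) * x.factorial / (x - (d - J)).factorial := by
  intro J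
  induction J with
  | zero => intro x hx; simp
  | succ J ih =>
    intro x hx
    rw [Function.iterate_succ_apply', fwdDiff]
    rw [ih (x + 1) (le_trans hx (Nat.le_succ x)), ih x hx]
    rcases le_or_gt d J with h | h
    · have h1 : d - J = 0 := Nat.sub_eq_zero_of_le h
      have h2 : d.descFactorial (J + 1) = 0 :=
        Nat.descFactorial_eq_zero_iff_lt.2 (Nat.lt_succ_of_le h)
      simp only [h1, h2, Nat.sub_zero, Nat.cast_zero, zero_mul, zero_div]
      rw [mul_div_assoc, mul_div_assoc, div_self (show ((x+1).factorial:ℚ) ≠ 0 by positivity),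
        div_self (show ((x).factorial:ℚ) ≠ 0 by positivity)]
      ring
    · -- J < d, set e = d - J ≥ 1, a = x - e
      set e := d - J with he
      have he1 : 1 ≤ e := Nat.le_sub_of_add_le (by omega)
      obtain ⟨a, ha⟩ : ∃ a, x = a + e := ⟨x - e, by omega⟩
      have h2 : d - (J + 1) = e - 1 := by omega
      have h3 : x + 1 - e = a + 1 := by omega
      have h4 : x - (e - 1) = a + 1 := by omega
      rw [Nat.descFactorial_succ, ← he, h2, h3, h4, ha]
      have hx1 : a + e - e = a := by omega
      rw [hx1]
      push_cast [Nat.factorial_succ, Nat.add_assoc]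
      have hfa : (a.factorial : ℚ) ≠ 0 := by positivity
      have hfa1 : ((a+1).factorial : ℚ) ≠ 0 := by positivity
      have hfe : (((a + (e+1)).factorial : ℚ)) = (a+e+1) * (a+e).factorial := by
        rw [show a+(e+1) = (a+e)+1 by ring, Nat.factorial_succ]; push_cast; ring
      rw [hfe]
      field_simp
      ring

theorem L_entry_identity (n j k : ℕ) (hj : 1 ≤ j) (hjn : j ≤ n) (hk : 1 ≤ k) (hkn : k ≤ n) :
    (j ≤ k →
      ∑ i ∈ Finset.Icc 1 j,
        (-1 : ℚ) ^ (i + j) * (n + i - 1).factorial /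
          ((n + i - k).factorial * (i - 1).factorial * (j - i).factorial)
        = ((k - 1).choose (j - 1)) * n.factorial / (n - k + j).factorial) ∧
    (k < j →
      ∑ i ∈ Finset.Icc 1 j,
        (-1 : ℚ) ^ (i + j) * (n + i - 1).factorial /
          ((n + i - k).factorial * (i - 1).factorial * (j - i).factorial)
        = 0) := by
  set J := j - 1 with hJ
  set d := k - 1 with hd
  have hjJ : j = J + 1 := by omega
  have hkd : k = d + 1 := by omega
  have hdn : d ≤ n := by omega
  have hsum : ∑ i ∈ Finset.Icc 1 j,
      (-1 : ℚ) ^ (i + j) * (n + i - 1).factorial /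
        ((n + i - k).factorial * (i - 1).factorial * (j - i).factorial)
      = (d.descFactorial J) * n.factorial / (n - (d - J)).factorial / J.factorial := by
    have hkey := key d J n hdn
    rw [fwdDiff_iter_eq_sum_shift] at hkey
    rw [show Finset.Icc 1 j = Finset.Ico 1 (j+1) from (Finset.Ico_add_one_right_eq_Icc 1 j).symm,
      Finset.sum_Ico_eq_sum_range, show j + 1 - 1 = J + 1 by omega]
    rw [← hkey, Finset.sum_div]
    apply Finset.sum_congr rfl
    intro m hm
    have hm' : m ≤ J := by simpa [Nat.lt_succ_iff] using hm
    have e1 : n + (1 + m) - 1 = n + m := by omega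
    have e2 : 1 + m - 1 = m := by omega
    have e3 : j - (1 + m) = J - m := by omega
    have e4 : n + (1 + m) - k = n + m - d := by omega
    have e5 : n + m • (1:ℕ) = n + m := by simp
    rw [e1, e2, e3, e4, e5]
    have hs : (-1:ℚ)^(1+m+j) = (-1:ℚ)^(J-m) := by
      rw [show 1+m+j = (J-m) + 2*(m+1) by omega, pow_add, pow_mul]
      simp
    have hc : ((J.choose m : ℚ)) * (m.factorial * (J-m).factorial) = J.factorial := by
      exact_mod_cast congrArg (Nat.cast (R := ℚ))
        (by rw [← Nat.choose_mul_factorial_mul_factorial hm']; ring)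
    simp only [zsmul_eq_mul]
    push_cast
    rw [hs]
    have h1 : (m.factorial : ℚ) ≠ 0 := by positivity
    have h2 : ((J-m).factorial : ℚ) ≠ 0 := by positivity
    have h3 : ((n+m-d).factorial : ℚ) ≠ 0 := by positivity
    have h4 : (J.factorial : ℚ) ≠ 0 := by positivity
    field_simp
    rw [← hc]
    ring
  constructor
  · intro hjk
    rw [hsum, Nat.descFactorial_eq_factorial_mul_choose,
      show n - (d - J) = n - k + j by omega]
    push_cast
    have h4 : (J.factorial : ℚ) ≠ 0 := by positivity
    have h5 : ((n-k+j).factorial : ℚ) ≠ 0 := by positivity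
    field_simp
  · intro hkj
    rw [hsum, Nat.descFactorial_eq_zero_iff_lt.2 (by omega)]
    simp
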